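/- Let Σ₂ = {a, b} with a < b of the same parity, and let w be a two-times differentiable infinite word over Σ₂ whose second derivative's run base alternates between a and b. Then the factor set of w is not closed under complementation (the permutation exchanging a and b): there is a factor f of w such that the word obtained from f by exchanging a and b is not a factor of w. -/

import Mathlib

/-- Partial sums of a sequence of run lengths. -/
def partialSum (t : ℕ → ℕ) : ℕ → ℕ
  | 0 => 0
  | k + 1 => partialSum t k + t k

/-- `w` decomposes into maximal runs with base sequence `α` and run-length
sequence `t`. -/
def IsRunDecomp (w α t : ℕ → ℕ) : Prop :=
  (∀ k, 1 ≤ t k) ∧ (∀ k, α k ≠ α (k + 1)) ∧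
    ∀ k i, partialSum t k ≤ i → i < partialSum t (k + 1) → w i = α k

/-- `t` is the run-length sequence Δ(w) of the infinite word `w`. -/
def IsDelta (w t : ℕ → ℕ) : Prop := ∃ α, IsRunDecomp w α t

/-- The finite word `f` occurs in `w` at position `p`. -/
def factorAt (w : ℕ → ℕ) (p : ℕ) (f : List ℕ) : Prop :=
  (List.range f.length).map (fun j => w (p + j)) = f

lemma psucc (t : ℕ → ℕ) (k : ℕ) : partialSum t (k + 1) = partialSum t k + t k := rfl

lemma ps_ge (t : ℕ → ℕ) (ht : ∀ k, 1 ≤ t k) : ∀ j, j ≤ partialSum t j := by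
  intro j
  induction j with
  | zero => simp
  | succ j ih => rw [psucc]; have := ht j; omega

lemma ps_strict (t : ℕ → ℕ) (ht : ∀ k, 1 ≤ t k) : StrictMono (partialSum t) :=
  strictMono_nat_of_lt_succ (fun n => by rw [psucc]; have := ht n; omega)

lemma exists_block (t : ℕ → ℕ) (ht : ∀ k, 1 ≤ t k) (i : ℕ) :
    ∃ k, partialSum t k ≤ i ∧ i < partialSum t (k + 1) := by
  induction i with
  | zero =>
    refine ⟨0, ?_, ?_⟩
    · have h0 : partialSum t 0 = 0 := rfl
      omega
    · have h0 : partialSum t 0 = 0 := rfl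
      have h1 := psucc t 0
      have := ht 0
      omega
  | succ i ih =>
    obtain ⟨k, h1, h2⟩ := ih
    by_cases h : i + 1 < partialSum t (k + 1)
    · exact ⟨k, by omega, h⟩
    · refine ⟨k + 1, by omega, ?_⟩
      rw [psucc]
      have := ht (k + 1); omega

lemma ps_parity (a : ℕ) (t : ℕ → ℕ) (hpar : ∀ k, t k % 2 = a % 2) (j : ℕ) :
    partialSum t j % 2 = j * a % 2 := by
  induction j with
  | zero => simp [partialSum]
  | succ j ih =>
    rw [psucc, Nat.add_mod, ih, hpar j, ← Nat.add_mod, Nat.succ_mul]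

lemma aux_two {a b x y z : ℕ} (hab : a ≠ b) (hx : x = a ∨ x = b) (hy : y = a ∨ y = b)
    (hz : z = a ∨ z = b) (hxz : x ≠ z) (hyz : y ≠ z) : x = y := by
  rcases hx with h | h <;> rcases hy with h' | h' <;> rcases hz with h'' | h'' <;> omega

lemma alt_eq {a b : ℕ} (hab : a ≠ b) (β : ℕ → ℕ) (hv : ∀ k, β k = a ∨ β k = b)
    (ha : ∀ k, β k ≠ β (k + 1)) (k : ℕ) :
    β k = if k % 2 = 0 then β 0 else β 1 := by
  induction k with
  | zero => simp
  | succ k ih =>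
    by_cases hk : k % 2 = 0
    · rw [if_pos hk] at ih
      rw [if_neg (by omega : ¬ (k + 1) % 2 = 0)]
      exact aux_two hab (hv (k + 1)) (hv 1) (hv 0)
        (by rw [← ih]; exact fun h => ha k h.symm) (fun h => ha 0 h.symm)
    · rw [if_neg hk] at ih
      rw [if_pos (by omega : (k + 1) % 2 = 0)]
      exact aux_two hab (hv (k + 1)) (hv 0) (hv 1)
        (by rw [← ih]; exact fun h => ha k h.symm) (ha 0)

lemma alt_of_parity {a b : ℕ} (hab : a ≠ b) (β : ℕ → ℕ) (hv : ∀ k, β k = a ∨ β k = b)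
    (ha : ∀ k, β k ≠ β (k + 1)) {k k' : ℕ} (h : k % 2 = k' % 2) : β k = β k' := by
  rw [alt_eq hab β hv ha k, alt_eq hab β hv ha k', h]

lemma parity_of_alt {a b : ℕ} (hab : a ≠ b) (β : ℕ → ℕ) (hv : ∀ k, β k = a ∨ β k = b)
    (ha : ∀ k, β k ≠ β (k + 1)) {k k' : ℕ} (h : β k = β k') : k % 2 = k' % 2 := by
  by_contra hne
  rw [alt_eq hab β hv ha k, alt_eq hab β hv ha k'] at h
  rcases Nat.mod_two_eq_zero_or_one k with h1 | h1 <;>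
    rcases Nat.mod_two_eq_zero_or_one k' with h2 | h2 <;> rw [h1, h2] at h hne
  · exact hne rfl
  · simp at h; exact ha 0 h
  · simp at h; exact ha 0 h.symm
  · exact hne rfl

lemma factorAt_get {w : ℕ → ℕ} {p : ℕ} {f : List ℕ} (h : factorAt w p f)
    {j : ℕ} (hj : j < f.length) : f[j]? = some (w (p + j)) := by
  conv_lhs => rw [← h]
  simp [hj]

/-- Over `{a, b}` with `a < b` of the same parity, if `w` is a two-times
differentiable infinite word whose second derivative decomposes into runs
(whose bases then necessarily alternate between `a` and `b`), then the factor
set of `w` is not closed under complementation: some factor `f` of `w` has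
complement `f̄` that is not a factor of `w`. -/
theorem stmt17 (a b : ℕ) (hlt : a < b) (hpar : a % 2 = b % 2) (hpos : 0 < a)
    (w d1 d2 : ℕ → ℕ) (hw : ∀ i, w i = a ∨ w i = b)
    (h1 : IsDelta w d1) (hd1 : ∀ i, d1 i = a ∨ d1 i = b)
    (h2 : IsDelta d1 d2) (hd2 : ∀ i, d2 i = a ∨ d2 i = b)
    (halt : ∃ α t, IsRunDecomp d2 α t) :
    ∃ f : List ℕ, (∃ p, factorAt w p f) ∧
      ¬ ∃ p, factorAt w p (f.map fun x => if x = a then b else a) := by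
  obtain ⟨β, hβ1, hβ2, hβ3⟩ := h1
  obtain ⟨α, hα1, hα2, hα3⟩ := h2
  have hab : a ≠ b := Nat.ne_of_lt hlt
  have hβv : ∀ k, β k = a ∨ β k = b := by
    intro k
    have h := hβ3 k (partialSum d1 k) le_rfl (by rw [psucc]; have := hβ1 k; omega)
    rw [← h]; exact hw _
  have hαv : ∀ j, α j = a ∨ α j = b := by
    intro j
    have h := hα3 j (partialSum d2 j) le_rfl (by rw [psucc]; have := hα1 j; omega)
    rw [← h]; exact hd1 _
  have hd1P : ∀ j, d1 (partialSum d2 j) = α j := fun j =>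
    hα3 j _ le_rfl (by rw [psucc]; have := hα1 j; omega)
  have hd2p : ∀ k, d2 k % 2 = a % 2 := by
    intro k; rcases hd2 k with h | h <;> omega
  -- key: the first run of any maximal block of equal-length runs has a letter
  -- determined by the common run length
  have key : ∀ j j', d1 (partialSum d2 j) = d1 (partialSum d2 j') →
      β (partialSum d2 j) = β (partialSum d2 j') := by
    intro j j' h
    apply alt_of_parity hab β hβv hβ2
    have hjj : j % 2 = j' % 2 := by
      apply parity_of_alt hab α hαv hα2
      rw [← hd1P j, ← hd1P j', h]
    rw [ps_parity a d2 hd2p j, ps_parity a d2 hd2p j', Nat.mul_mod, Nat.mul_mod j' a, hjj]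
  have hstart : ∀ k, 1 ≤ k → d1 (k - 1) ≠ d1 k → ∃ j, k = partialSum d2 j := by
    intro k hk hne
    obtain ⟨j, h1, h2⟩ := exists_block d2 hα1 k
    refine ⟨j, ?_⟩
    by_contra hcon
    exact hne ((hα3 j (k - 1) (by omega) (by omega)).trans (hα3 j k h1 h2).symm)
  obtain ⟨m, hm⟩ : ∃ m, partialSum d2 2 = m + 2 :=
    ⟨partialSum d2 2 - 2, by have := ps_ge d2 hα1 2; omega⟩
  -- basic partial-sum equations
  have hm1 := psucc d1 m
  have hm2 := psucc d1 (m + 1)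
  have hm3 := psucc d1 (m + 2)
  have hm4 := psucc d1 (m + 3)
  have hbb1 : partialSum d1 (m + 1 + 1) = partialSum d1 (m + 2) := rfl
  have hbb2 : partialSum d1 (m + 2 + 1) = partialSum d1 (m + 3) := rfl
  have hbb3 : partialSum d1 (m + 3 + 1) = partialSum d1 (m + 4) := rfl
  have hq0 : partialSum d2 0 = 0 := rfl
  have hq1 := psucc d2 0
  have hq2 := psucc d2 1
  have hq3 := psucc d2 2
  have hqb1 : partialSum d2 (0 + 1) = partialSum d2 1 := rfl
  have hqb2 : partialSum d2 (1 + 1) = partialSum d2 2 := rfl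
  have hg0 := hβ1 m
  have hg1 := hβ1 (m + 1)
  have hg2 := hβ1 (m + 2)
  have hg3 := hβ1 (m + 3)
  have hcα1 : d1 (m + 1) = α 1 :=
    hα3 1 (m + 1) (by have := hα1 1; omega) (by omega)
  have hcα2 : d1 (m + 2) = α 2 :=
    hα3 2 (m + 2) (by omega) (by rw [psucc]; have := hα1 2; omega)
  have hcc : d1 (m + 1) ≠ d1 (m + 2) := by rw [hcα1, hcα2]; exact hα2 1
  set p := partialSum d1 m + d1 m - 1 with hpdef
  have hp1 : p + 1 = partialSum d1 (m + 1) := by omega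
  refine ⟨(List.range (d1 (m + 1) + d1 (m + 2) + 2)).map (fun j => w (p + j)), ⟨p, ?_⟩, ?_⟩
  · unfold factorAt
    simp
  · rintro ⟨q, hq⟩
    have hfu : (if β (m + 2) = a then b else a) = β (m + 1) := by
      have h1 := hβv (m + 1); have h2 := hβv (m + 2)
      have h3 : β (m + 1) ≠ β (m + 2) := hβ2 (m + 1)
      split_ifs with h <;> omega
    have hfv : (if β (m + 1) = a then b else a) = β (m + 2) := by
      have h1 := hβv (m + 1); have h2 := hβv (m + 2)
      have h3 : β (m + 1) ≠ β (m + 2) := hβ2 (m + 1)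
      split_ifs with h <;> omega
    have hpt : ∀ j, j < d1 (m + 1) + d1 (m + 2) + 2 →
        w (q + j) = (if w (p + j) = a then b else a) := by
      intro j hj
      have h1 := factorAt_get hq (j := j) (by simpa using hj)
      rw [List.getElem?_map] at h1
      have h2 : ((List.range (d1 (m + 1) + d1 (m + 2) + 2)).map (fun j => w (p + j)))[j]?
          = some (w (p + j)) := by
        simp [hj]
      rw [h2] at h1
      simp only [Option.map_some] at h1
      exact (Option.some.inj h1).symm
    have hA : w p = β m := hβ3 m p (by omega) (by omega)
    have hm02 : β m = β (m + 2) := alt_of_parity hab β hβv hβ2 (by omega)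
    have hm13 : β (m + 3) = β (m + 1) := alt_of_parity hab β hβv hβ2 (by omega)
    have e0 : w q = β (m + 1) := by
      have h := hpt 0 (by omega)
      simp only [Nat.add_zero] at h
      simp only [hA, hm02, hfu] at h
      exact h
    have e1 : ∀ j, 1 ≤ j → j ≤ d1 (m + 1) → w (q + j) = β (m + 2) := by
      intro j hj1 hj2
      have h := hpt j (by omega)
      have h2 : w (p + j) = β (m + 1) := hβ3 (m + 1) (p + j) (by omega) (by omega)
      simp only [h2, hfv] at h
      exact h
    have e2 : ∀ j, d1 (m + 1) + 1 ≤ j → j ≤ d1 (m + 1) + d1 (m + 2) →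
        w (q + j) = β (m + 1) := by
      intro j hj1 hj2
      have h := hpt j (by omega)
      have h2 : w (p + j) = β (m + 2) := hβ3 (m + 2) (p + j) (by omega) (by omega)
      simp only [h2, hfu] at h
      exact h
    have e3 : w (q + (d1 (m + 1) + d1 (m + 2) + 1)) = β (m + 2) := by
      have h := hpt (d1 (m + 1) + d1 (m + 2) + 1) (by omega)
      have h2 : w (p + (d1 (m + 1) + d1 (m + 2) + 1)) = β (m + 3) :=
        hβ3 (m + 3) _ (by omega) (by omega)
      simp only [h2, hm13, hfv] at h
      exact h
    -- identify the runs of `w` inside the occurrence of the complement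
    obtain ⟨k', hk1, hk2⟩ := exists_block d1 hβ1 (q + (d1 (m + 1) + 1))
    have hpk := psucc d1 k'
    have hgk := hβ1 k'
    have hβk' : β k' = β (m + 1) := by
      have h := hβ3 k' (q + (d1 (m + 1) + 1)) hk1 hk2
      rw [e2 (d1 (m + 1) + 1) (by omega) (by omega)] at h
      exact h.symm
    have h5 : ¬ partialSum d1 k' ≤ q + d1 (m + 1) := by
      intro hle
      have hw1 := hβ3 k' (q + d1 (m + 1)) hle (by omega)
      rw [e1 (d1 (m + 1)) (by omega) le_rfl] at hw1
      exact hβ2 (m + 1) ((hw1.trans hβk').symm)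
    have hSk : partialSum d1 k' = q + (d1 (m + 1) + 1) := by omega
    have h6 : ¬ partialSum d1 (k' + 1) ≤ q + (d1 (m + 1) + d1 (m + 2)) := by
      intro hle
      have hgk1 := hβ1 (k' + 1)
      have hpk1 := psucc d1 (k' + 1)
      have hw1 := hβ3 (k' + 1) (partialSum d1 (k' + 1)) le_rfl (by omega)
      rw [show partialSum d1 (k' + 1) = q + (partialSum d1 (k' + 1) - q) by omega] at hw1
      rw [e2 (partialSum d1 (k' + 1) - q) (by omega) (by omega)] at hw1
      exact hβ2 k' (hβk'.trans hw1)
    have h7 : ¬ q + (d1 (m + 1) + d1 (m + 2) + 1) < partialSum d1 (k' + 1) := by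
      intro hlt'
      have hw1 := hβ3 k' (q + (d1 (m + 1) + d1 (m + 2) + 1)) (by omega) hlt'
      rw [e3] at hw1
      exact hβ2 (m + 1) ((hw1.trans hβk').symm)
    have hSk1 : partialSum d1 (k' + 1) = q + (d1 (m + 1) + d1 (m + 2) + 1) := by omega
    have hd1k' : d1 k' = d1 (m + 2) := by omega
    have hk'pos : 1 ≤ k' := by
      rcases Nat.eq_zero_or_pos k' with h | h
      · rw [h] at hSk
        have h0 : partialSum d1 0 = 0 := rfl
        omega
      · exact h
    obtain ⟨n, rfl⟩ : ∃ n, k' = n + 1 := ⟨k' - 1, by omega⟩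
    have hpn := psucc d1 n
    have hgn := hβ1 n
    have h8 : ¬ partialSum d1 n ≤ q := by
      intro hle
      have hw1 := hβ3 n q hle (by omega)
      rw [e0] at hw1
      exact hβ2 n (hw1.symm.trans hβk'.symm)
    have h9 : partialSum d1 n = q + 1 := by
      by_contra hne
      obtain ⟨r, hr1, hr2⟩ := exists_block d1 hβ1 (partialSum d1 n - 1)
      have hmono := ps_strict d1 hβ1
      have hrn : r + 1 = n := by
        have ha1 : r < n := by
          by_contra hcon
          have := hmono.le_iff_le.mpr (show n ≤ r by omega)
          omega
        have ha2 : ¬ (r + 1 < n) := by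
          intro hcon
          have := hmono hcon
          omega
        omega
      have hv1 := hβ3 r (partialSum d1 n - 1) hr1 hr2
      have hv2 := e1 (partialSum d1 n - 1 - q) (by omega) (by omega)
      rw [show q + (partialSum d1 n - 1 - q) = partialSum d1 n - 1 by omega] at hv2
      have hv3 := hβ3 n (partialSum d1 n) le_rfl (by omega)
      have hv4 := e1 (partialSum d1 n - q) (by omega) (by omega)
      rw [show q + (partialSum d1 n - q) = partialSum d1 n by omega] at hv4
      have hrr : β r = β n := by rw [← hv1, hv2, ← hv4, hv3]
      rw [← hrn] at hrr
      exact hβ2 r hrr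
    have hd1n : d1 n = d1 (m + 1) := by omega
    have hne2 : d1 (n + 1 - 1) ≠ d1 (n + 1) := by
      simp only [Nat.add_sub_cancel]
      rw [hd1n, hd1k']
      exact hcc
    obtain ⟨j', hj'⟩ := hstart (n + 1) (by omega) hne2
    have hfin := key j' 2 (by rw [← hj', hm]; exact hd1k')
    rw [← hj', hm] at hfin
    exact hβ2 (m + 1) (hβk'.symm.trans hfin)
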